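/- Let α be an arbitrary type (the set of propositional variables, of arbitrary cardinality). Let 𝒜 be a family of subsets of the valuation space (α → Bool) such that every A ∈ 𝒜 is nonempty, the members of 𝒜 are pairwise disjoint, and every A ∈ 𝒜 is determined by finitely many coordinates. Then 𝒜 is a countable family (i.e., the set 𝒜 ⊆ Set (Set (α → Bool)) is countable). -/

import Mathlib

/-- Any family of nonempty, pairwise disjoint subsets of the valuation space `α → Bool`,
each of which is determined by finitely many coordinates, is countable. -/
theorem countable_of_pairwise_disjoint_finitely_determined
    {α : Type*} (𝒜 : Set (Set (α → Bool)))
    (hne : ∀ A ∈ 𝒜, A.Nonempty)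
    (hdisj : 𝒜.Pairwise fun A B => Disjoint A B)
    (hfin : ∀ A ∈ 𝒜, ∃ S : Finset α,
      ∀ v w : α → Bool, (∀ p ∈ S, v p = w p) → (v ∈ A ↔ w ∈ A)) :
    𝒜.Countable := by
  classical
  choose! S hS using hfin
  choose! v hv using hne
  have key : ∀ k : ℕ, {A | A ∈ 𝒜 ∧ (S A).card ≤ k}.Finite := by
    intro k
    by_contra hinf
    obtain ⟨F, hF, hFcard⟩ := Set.Infinite.exists_subset_card_eq hinf (2 ^ k + 1)
    have hmem : ∀ A ∈ F, A ∈ 𝒜 := fun A hA => (hF hA).1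
    set N : Finset α := F.biUnion S with hN
    have hsub : ∀ A ∈ F, S A ⊆ N := fun A hA => Finset.subset_biUnion_of_mem S hA
    set k' : ℕ := min k N.card with hk'
    have hcard : ∀ A ∈ F, (S A).card ≤ k' := fun A hA =>
      le_min (hF hA).2 (Finset.card_le_card (hsub A hA))
    set T : Set (α → Bool) → Finset (↥N → Bool) :=
      fun A => Finset.univ.filter (fun g => ∀ x : ↥N, ↑x ∈ S A → g x = v A ↑x) with hT
    have hTdisj : ∀ A ∈ F, ∀ B ∈ F, A ≠ B → Disjoint (T A) (T B) := by
      intro A hA B hB hAB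
      rw [Finset.disjoint_left]
      intro g hgA hgB
      simp only [hT, Finset.mem_filter, Finset.mem_univ, true_and] at hgA hgB
      set w : α → Bool := fun p => if hp : p ∈ N then g ⟨p, hp⟩ else false with hw
      have hwA : w ∈ A := by
        refine (hS A (hmem A hA) (v A) w ?_).mp (hv A (hmem A hA))
        intro p hp
        have hpN : p ∈ N := hsub A hA hp
        simp [hw, hpN, hgA ⟨p, hpN⟩ hp]
      have hwB : w ∈ B := by
        refine (hS B (hmem B hB) (v B) w ?_).mp (hv B (hmem B hB))
        intro p hp
        have hpN : p ∈ N := hsub B hB hp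
        simp [hw, hpN, hgB ⟨p, hpN⟩ hp]
      exact Set.disjoint_left.mp (hdisj (hmem A hA) (hmem B hB) hAB) hwA hwB
    have hTcard : ∀ A ∈ F, 2 ^ (N.card - k') ≤ (T A).card := by
      intro A hA
      set ι : (↥(N \ S A) → Bool) → (↥N → Bool) :=
        fun g => (fun x : ↥N => if hx : (x : α) ∈ S A then v A x else
            g ⟨x, Finset.mem_sdiff.mpr ⟨x.2, hx⟩⟩) with hι
      have inj : Function.Injective ι := by
        intro g g' h
        funext x
        have hx1 : (x : α) ∈ N := (Finset.mem_sdiff.mp x.2).1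
        have hx2 : (x : α) ∉ S A := (Finset.mem_sdiff.mp x.2).2
        have := congrFun h ⟨x, hx1⟩
        simpa [hι, hx2] using this
      have himg : ∀ g : ↥(N \ S A) → Bool, ι g ∈ T A := by
        intro g
        simp only [hT, hι, Finset.mem_filter, Finset.mem_univ, true_and]
        intro x hx
        simp [hx]
      calc 2 ^ (N.card - k') ≤ 2 ^ ((N \ S A).card) := by
            apply Nat.pow_le_pow_right (by norm_num)
            rw [Finset.card_sdiff_of_subset (hsub A hA)]
            exact Nat.sub_le_sub_left (hcard A hA) N.card
        _ = Fintype.card (↥(N \ S A) → Bool) := by simp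
        _ = (Finset.univ : Finset (↥(N \ S A) → Bool)).card := (Finset.card_univ).symm
        _ ≤ (T A).card :=
            Finset.card_le_card_of_injOn ι (fun g _ => himg g) inj.injOn
    have hsum : ∑ A ∈ F, (T A).card ≤ 2 ^ N.card := by
      rw [← Finset.card_biUnion hTdisj]
      calc (F.biUnion T).card ≤ (Finset.univ : Finset (↥N → Bool)).card :=
            Finset.card_le_univ _
        _ = 2 ^ N.card := by simp
    have h1 : (2 ^ k + 1) * 2 ^ (N.card - k') ≤ ∑ A ∈ F, (T A).card := by
      calc (2 ^ k + 1) * 2 ^ (N.card - k') = ∑ _A ∈ F, 2 ^ (N.card - k') := by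
            rw [Finset.sum_const, smul_eq_mul, hFcard]
        _ ≤ ∑ A ∈ F, (T A).card := Finset.sum_le_sum hTcard
    have h2 : 2 ^ N.card = 2 ^ k' * 2 ^ (N.card - k') := by
      rw [← pow_add, Nat.add_sub_cancel' (min_le_right k N.card)]
    have h3 : (2 ^ k + 1) * 2 ^ (N.card - k') ≤ 2 ^ k' * 2 ^ (N.card - k') :=
      (h1.trans hsum).trans_eq h2
    have hpos : 0 < 2 ^ (N.card - k') := Nat.pow_pos (by norm_num)
    have h4 : 2 ^ k + 1 ≤ 2 ^ k' := Nat.le_of_mul_le_mul_right h3 hpos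
    have h5 : 2 ^ k' ≤ 2 ^ k := Nat.pow_le_pow_right (by norm_num) (min_le_left _ _)
    omega
  have hcover : 𝒜 ⊆ ⋃ k : ℕ, {A | A ∈ 𝒜 ∧ (S A).card ≤ k} := by
    intro A hA
    exact Set.mem_iUnion.mpr ⟨(S A).card, hA, le_refl _⟩
  exact (Set.countable_iUnion (fun k => (key k).countable)).mono hcover
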